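/- The 4-cycle C_4 satisfies ρ_T(C_4) = 2. -/
import Mathlib


/-- A min-plus `k`-tropical dot product representation of `G` with threshold `t`:
distinct vertices `x, y` are adjacent iff `min_{1 ≤ i ≤ k} (f(x)_i + f(y)_i) ≥ t`
(equivalently, every coordinate sum is at least `t`). -/
def MinPlusRep {V : Type*} (G : SimpleGraph V) (k : ℕ) (f : V → Fin k → ℝ) (t : ℝ) : Prop :=
  0 < t ∧ ∀ x y : V, x ≠ y → (G.Adj x y ↔ ∀ i : Fin k, t ≤ f x i + f y i)

/-- The min-plus tropical dot product dimension `ρ_T(G)`. -/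
noncomputable def rhoT {V : Type*} (G : SimpleGraph V) : ℕ :=
  sInf {k : ℕ | 0 < k ∧ ∃ (f : V → Fin k → ℝ) (t : ℝ), MinPlusRep G k f t}

lemma c4_adj (u v : Fin 4) : (SimpleGraph.cycleGraph 4).Adj u v ↔
    (u - v = 1 ∨ v - u = 1) := SimpleGraph.cycleGraph_adj

def c4Set : Set ℕ :=
  {k : ℕ | 0 < k ∧ ∃ (f : Fin 4 → Fin k → ℝ) (t : ℝ),
    MinPlusRep (SimpleGraph.cycleGraph 4) k f t}

/-- representation of C4 in dimension 2 -/
noncomputable def c4f : Fin 4 → Fin 2 → ℝ :=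
  ![![0, 1], ![1, 0], ![0, 1], ![1, 0]]

lemma two_mem : 2 ∈ c4Set := by
  refine ⟨two_pos, c4f, 1, one_pos, ?_⟩
  intro x y hxy
  rw [c4_adj]
  fin_cases x <;> fin_cases y <;>
    simp_all [c4f, Fin.forall_fin_two, Fin.ext_iff] <;> norm_num <;> decide

lemma one_not_mem : 1 ∉ c4Set := by
  rintro ⟨-, f, t, ht, h⟩
  have adj : ∀ u v : Fin 4, u ≠ v → ((SimpleGraph.cycleGraph 4).Adj u v ↔ t ≤ f u 0 + f v 0) := by
    intro u v huv
    rw [h u v huv]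
    constructor
    · intro h'; exact h' 0
    · intro h' i; exact Fin.cases h' (fun j => j.elim0) i
  have h01 : t ≤ f 0 0 + f 1 0 := (adj 0 1 (by decide)).mp (by rw [c4_adj]; decide)
  have h23 : t ≤ f 2 0 + f 3 0 := (adj 2 3 (by decide)).mp (by rw [c4_adj]; decide)
  have h02 : ¬ t ≤ f 0 0 + f 2 0 := fun hh =>
    (by rw [c4_adj]; decide : ¬ (SimpleGraph.cycleGraph 4).Adj 0 2) ((adj 0 2 (by decide)).mpr hh)
  have h13 : ¬ t ≤ f 1 0 + f 3 0 := fun hh =>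
    (by rw [c4_adj]; decide : ¬ (SimpleGraph.cycleGraph 4).Adj 1 3) ((adj 1 3 (by decide)).mpr hh)
  push_neg at h02 h13
  linarith

/-- The 4-cycle satisfies `ρ_T(C_4) = 2`. -/
theorem stmt_11 : rhoT (SimpleGraph.cycleGraph 4) = 2 := by
  have hrw : rhoT (SimpleGraph.cycleGraph 4) = sInf c4Set := rfl
  rw [hrw]
  have hmem := Nat.sInf_mem (⟨2, two_mem⟩ : c4Set.Nonempty)
  refine le_antisymm (Nat.sInf_le two_mem) ?_
  by_contra hlt
  push_neg at hlt
  set n := sInf c4Set with hn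
  interval_cases n
  · exact absurd hmem.1 (lt_irrefl 0)
  · exact one_not_mem hmem
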